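/- Suppose the initial velocity field v : [0,1] → ℝ is positive and non-decreasing and the external force F : ℝ → ℝ is positive and non-decreasing on [0,∞). Then the system has no collisions on [0,∞): y(t,x₁) ≠ y(t,x₂) for all t ≥ 0 and all x₁ ≠ x₂ in [0,1]. -/
import Mathlib


open Set

private lemma monoOn_of_hasDerivAt' {f f' : ℝ → ℝ} {T : ℝ}
    (hd : ∀ t ∈ Icc (0:ℝ) T, HasDerivAt f (f' t) t)
    (h' : ∀ t ∈ Ioo (0:ℝ) T, 0 ≤ f' t) : MonotoneOn f (Icc (0:ℝ) T) := by
  apply monotoneOn_of_deriv_nonneg (convex_Icc 0 T)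
  · exact fun t ht => (hd t ht).continuousAt.continuousWithinAt
  · intro t ht
    rw [interior_Icc] at ht
    exact (hd t (Ioo_subset_Icc_self ht)).differentiableAt.differentiableWithinAt
  · intro t ht
    rw [interior_Icc] at ht
    rw [(hd t (Ioo_subset_Icc_self ht)).deriv]
    exact h' t ht

private lemma strictMonoOn_of_hasDerivAt' {f f' : ℝ → ℝ} {T : ℝ}
    (hd : ∀ t ∈ Icc (0:ℝ) T, HasDerivAt f (f' t) t)
    (h' : ∀ t ∈ Ioo (0:ℝ) T, 0 < f' t) : StrictMonoOn f (Icc (0:ℝ) T) := by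
  apply strictMonoOn_of_deriv_pos (convex_Icc 0 T)
  · exact fun t ht => (hd t ht).continuousAt.continuousWithinAt
  · intro t ht
    rw [interior_Icc] at ht
    rw [(hd t (Ioo_subset_Icc_self ht)).deriv]
    exact h' t ht

/-- One-dimensional particles labeled by initial positions `x ∈ [0,1]`,
with trajectories `y x : ℝ → ℝ` and velocities `y' x : ℝ → ℝ` solving Newton's equation
`(y x)'' t = F (y x t)`, `y x 0 = x`, `(y x)' 0 = v x`.  If the initial velocity field `v`
is positive and non-decreasing on `[0,1]`, and the force `F` is positive and non-decreasing
on `[0,∞)`, then there are no collisions on `[0,∞)`. -/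
theorem no_collisions_of_monotone_velocity_and_force
    (F v : ℝ → ℝ) (y y' : ℝ → ℝ → ℝ)
    (hF_cont : Continuous F)
    (hF_pos : ∀ z, 0 ≤ z → 0 < F z)
    (hF_mono : MonotoneOn F (Ici (0 : ℝ)))
    (hv_pos : ∀ x ∈ Icc (0:ℝ) 1, 0 < v x)
    (hv_mono : MonotoneOn v (Icc (0:ℝ) 1))
    (hy0 : ∀ x ∈ Icc (0:ℝ) 1, y x 0 = x)
    (hy0' : ∀ x ∈ Icc (0:ℝ) 1, y' x 0 = v x)
    (hode1 : ∀ x ∈ Icc (0:ℝ) 1, ∀ t, 0 ≤ t → HasDerivAt (y x) (y' x t) t)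
    (hode2 : ∀ x ∈ Icc (0:ℝ) 1, ∀ t, 0 ≤ t → HasDerivAt (y' x) (F (y x t)) t) :
    ∀ t, 0 ≤ t → ∀ x₁ ∈ Icc (0:ℝ) 1, ∀ x₂ ∈ Icc (0:ℝ) 1, x₁ ≠ x₂ → y x₁ t ≠ y x₂ t := by
  -- Step 1: velocities stay positive
  have key : ∀ x ∈ Icc (0:ℝ) 1, ∀ t, 0 ≤ t → 0 < y' x t := by
    intro x hx
    by_contra h
    push_neg at h
    obtain ⟨t0, ht0, ht0'⟩ := h
    set S := {t : ℝ | 0 ≤ t ∧ y' x t ≤ 0} with hS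
    have hSne : S.Nonempty := ⟨t0, ht0, ht0'⟩
    have hSbdd : BddBelow S := ⟨0, fun s hs => hs.1⟩
    have hScl : IsClosed S := by
      have h1 : ContinuousOn (y' x) (Ici 0) :=
        fun t ht => (hode2 x hx t ht).continuousAt.continuousWithinAt
      have : S = Ici (0:ℝ) ∩ (y' x) ⁻¹' Iic 0 := by
        ext s; simp only [hS, mem_setOf_eq, mem_inter_iff, mem_Ici, mem_preimage, mem_Iic]
      rw [this]
      exact h1.preimage_isClosed_of_isClosed isClosed_Ici isClosed_Iic
    set T := sInf S with hT
    have hTS : T ∈ S := hScl.csInf_mem hSne hSbdd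
    have hT0 : 0 ≤ T := hTS.1
    have hvx : 0 < v x := hv_pos x hx
    have hTne : T ≠ 0 := by
      intro h0
      have := hTS.2
      rw [h0, hy0' x hx] at this
      linarith
    have hTpos : 0 < T := lt_of_le_of_ne hT0 (Ne.symm hTne)
    have hpos : ∀ s ∈ Ioo (0:ℝ) T, 0 < y' x s := by
      intro s hs
      by_contra hns
      push_neg at hns
      have : T ≤ s := csInf_le hSbdd ⟨le_of_lt hs.1, hns⟩
      exact absurd hs.2 (not_lt.mpr this)
    have hmono : MonotoneOn (y x) (Icc 0 T) :=
      monoOn_of_hasDerivAt' (fun s hs => hode1 x hx s hs.1)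
        (fun s hs => le_of_lt (hpos s hs))
    have hynn : ∀ s ∈ Icc (0:ℝ) T, 0 ≤ y x s := by
      intro s hs
      have := hmono (Set.left_mem_Icc.mpr hT0) hs hs.1
      rw [hy0 x hx] at this
      linarith [hx.1]
    have hstrict : StrictMonoOn (y' x) (Icc 0 T) :=
      strictMonoOn_of_hasDerivAt' (fun s hs => hode2 x hx s hs.1)
        (fun s hs => hF_pos _ (hynn s (Ioo_subset_Icc_self hs)))
    have := hstrict (Set.left_mem_Icc.mpr hT0) (Set.right_mem_Icc.mpr hT0) hTpos
    rw [hy0' x hx] at this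
    have := hTS.2
    linarith
  -- Step 2: trajectories stay nonnegative
  have ynn : ∀ x ∈ Icc (0:ℝ) 1, ∀ t, 0 ≤ t → 0 ≤ y x t := by
    intro x hx t ht
    have hmono : MonotoneOn (y x) (Icc 0 t) :=
      monoOn_of_hasDerivAt' (fun s hs => hode1 x hx s hs.1)
        (fun s hs => le_of_lt (key x hx s (le_of_lt hs.1)))
    have := hmono (Set.left_mem_Icc.mpr ht) (Set.right_mem_Icc.mpr ht) ht
    rw [hy0 x hx] at this
    linarith [hx.1]
  -- Step 3: ordering is preserved
  have main : ∀ x₁ ∈ Icc (0:ℝ) 1, ∀ x₂ ∈ Icc (0:ℝ) 1, x₁ < x₂ →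
      ∀ t, 0 ≤ t → 0 < y x₂ t - y x₁ t := by
    intro x₁ hx₁ x₂ hx₂ hlt
    by_contra h
    push_neg at h
    obtain ⟨t0, ht0, ht0'⟩ := h
    set w : ℝ → ℝ := fun s => y x₂ s - y x₁ s with hw
    have hw0 : w 0 = x₂ - x₁ := by simp [hw, hy0 x₁ hx₁, hy0 x₂ hx₂]
    have hwd : ∀ s, 0 ≤ s → HasDerivAt w (y' x₂ s - y' x₁ s) s :=
      fun s hs => (hode1 x₂ hx₂ s hs).sub (hode1 x₁ hx₁ s hs)
    have hwd' : ∀ s, 0 ≤ s → HasDerivAt (fun s => y' x₂ s - y' x₁ s)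
        (F (y x₂ s) - F (y x₁ s)) s :=
      fun s hs => (hode2 x₂ hx₂ s hs).sub (hode2 x₁ hx₁ s hs)
    set S := {t : ℝ | 0 ≤ t ∧ w t ≤ 0} with hS
    have hSne : S.Nonempty := ⟨t0, ht0, by simpa [hw] using ht0'⟩
    have hSbdd : BddBelow S := ⟨0, fun s hs => hs.1⟩
    have hScl : IsClosed S := by
      have h1 : ContinuousOn w (Ici 0) :=
        fun s hs => (hwd s hs).continuousAt.continuousWithinAt
      have : S = Ici (0:ℝ) ∩ w ⁻¹' Iic 0 := by
        ext s; simp only [hS, mem_setOf_eq, mem_inter_iff, mem_Ici, mem_preimage, mem_Iic]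
      rw [this]
      exact h1.preimage_isClosed_of_isClosed isClosed_Ici isClosed_Iic
    set T := sInf S with hT
    have hTS : T ∈ S := hScl.csInf_mem hSne hSbdd
    have hT0 : 0 ≤ T := hTS.1
    have hTne : T ≠ 0 := by
      intro h0
      have := hTS.2
      rw [h0, hw0] at this
      linarith
    have hTpos : 0 < T := lt_of_le_of_ne hT0 (Ne.symm hTne)
    have hpos : ∀ s ∈ Ioo (0:ℝ) T, 0 < w s := by
      intro s hs
      by_contra hns
      push_neg at hns
      have : T ≤ s := csInf_le hSbdd ⟨le_of_lt hs.1, hns⟩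
      exact absurd hs.2 (not_lt.mpr this)
    -- w'' ≥ 0 on the interior, so w' is monotone on [0,T]
    have hmono' : MonotoneOn (fun s => y' x₂ s - y' x₁ s) (Icc 0 T) := by
      apply monoOn_of_hasDerivAt' (fun s hs => hwd' s hs.1)
      intro s hs
      have h1 : 0 ≤ y x₁ s := ynn x₁ hx₁ s (le_of_lt hs.1)
      have h2 : y x₁ s ≤ y x₂ s := by
        have := hpos s hs; simp [hw] at this; linarith
      have := hF_mono (mem_Ici.mpr h1) (mem_Ici.mpr (le_trans h1 h2)) h2
      linarith
    have hw'0 : (fun s => y' x₂ s - y' x₁ s) 0 = v x₂ - v x₁ := by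
      simp [hy0' x₁ hx₁, hy0' x₂ hx₂]
    have hvmono : v x₁ ≤ v x₂ := hv_mono hx₁ hx₂ (le_of_lt hlt)
    have hw'nn : ∀ s ∈ Ioo (0:ℝ) T, 0 ≤ y' x₂ s - y' x₁ s := by
      intro s hs
      have := hmono' (Set.left_mem_Icc.mpr hT0) (Ioo_subset_Icc_self hs) (le_of_lt hs.1)
      rw [hw'0] at this
      have h2 : v x₂ - v x₁ ≤ y' x₂ s - y' x₁ s := this
      linarith
    have hwmono : MonotoneOn w (Icc 0 T) :=
      monoOn_of_hasDerivAt' (fun s hs => hwd s hs.1) hw'nn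
    have := hwmono (Set.left_mem_Icc.mpr hT0) (Set.right_mem_Icc.mpr hT0) hT0
    rw [hw0] at this
    have := hTS.2
    linarith
  intro t ht x₁ hx₁ x₂ hx₂ hne
  rcases lt_or_gt_of_ne hne with hlt | hlt
  · have := main x₁ hx₁ x₂ hx₂ hlt t ht
    intro heq; rw [heq] at this; linarith
  · have := main x₂ hx₂ x₁ hx₁ hlt t ht
    intro heq; rw [heq] at this; linarith
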